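/- For every real m > 1, the function φ_m : \overline\nabla_\infty → ℝ defined by φ_m(x) := ∑_{i=1}^∞ x_i^m is continuous on \overline\nabla_\infty with respect to the product topology (the series converges for every x ∈ \overline\nabla_\infty, with ∑_{i>N} x_i^m ≤ (N+1)^{-(m-1)} for every N). -/

import Mathlib

open Real Filter

/-- The Kingman simplex: nonincreasing nonnegative sequences with sum at most 1. -/
def KingmanSimplex : Set (ℕ → ℝ) :=
  {x | (∀ i, x (i + 1) ≤ x i) ∧ (∀ i, 0 ≤ x i) ∧ Summable x ∧ ∑' i, x i ≤ 1}

lemma kingman_le {x : ℕ → ℝ} (hx : x ∈ KingmanSimplex) (i : ℕ) :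
    x i ≤ 1 / ((i : ℝ) + 1) := by
  obtain ⟨hmono, hnn, hsum, hle⟩ := hx
  have hanti : Antitone x := antitone_nat_of_succ_le hmono
  have key : ((i : ℝ) + 1) * x i ≤ 1 := by
    calc ((i : ℝ) + 1) * x i = ∑ _j ∈ Finset.range (i + 1), x i := by
          rw [Finset.sum_const, Finset.card_range, nsmul_eq_mul]; push_cast; ring
      _ ≤ ∑ j ∈ Finset.range (i + 1), x j :=
          Finset.sum_le_sum fun j hj => hanti (Nat.lt_succ_iff.mp (Finset.mem_range.mp hj))
      _ ≤ ∑' j, x j := Summable.sum_le_tsum _ (fun j _ => hnn j) hsum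
      _ ≤ 1 := hle
  rw [le_div_iff₀ (by positivity)]
  linarith [key]

lemma kingman_pow_le (m : ℝ) (hm : 1 < m) {x : ℕ → ℝ} (hx : x ∈ KingmanSimplex) (i : ℕ) :
    x i ^ m ≤ ((i : ℝ) + 1) ^ (-m) := by
  have hnn := hx.2.1 i
  have h1 : x i ^ m ≤ (1 / ((i : ℝ) + 1)) ^ m :=
    Real.rpow_le_rpow hnn (kingman_le hx i) (by linarith)
  rwa [one_div, Real.inv_rpow (by positivity), ← Real.rpow_neg (by positivity)] at h1

lemma u_summable (m : ℝ) (hm : 1 < m) :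
    Summable (fun i : ℕ => ((i : ℝ) + 1) ^ (-m)) := by
  have h := (Real.summable_nat_rpow (p := -m)).mpr (by linarith)
  have h2 := (summable_nat_add_iff 1).mpr h
  simpa [Nat.cast_add] using h2

lemma kingman_summable_pow (m : ℝ) (hm : 1 < m) {x : ℕ → ℝ} (hx : x ∈ KingmanSimplex) :
    Summable (fun i => x i ^ m) :=
  Summable.of_nonneg_of_le (fun i => Real.rpow_nonneg (hx.2.1 i) m)
    (fun i => kingman_pow_le m hm hx i) (u_summable m hm)

lemma kingman_tail (m : ℝ) (hm : 1 < m) {x : ℕ → ℝ} (hx : x ∈ KingmanSimplex) (N : ℕ) :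
    ∑' i : ℕ, x (N + i) ^ m ≤ ((N : ℝ) + 1) ^ (-(m - 1)) := by
  obtain ⟨hmono, hnn, hsum, hle⟩ := hx
  set c : ℝ := ((N : ℝ) + 1) ^ (-(m - 1)) with hc
  have hcnn : 0 ≤ c := Real.rpow_nonneg (by positivity) _
  -- pointwise bound
  have hpt : ∀ i : ℕ, x (N + i) ^ m ≤ c * x (N + i) := by
    intro i
    rcases eq_or_lt_of_le (hnn (N + i)) with h0 | hpos
    · rw [← h0, Real.zero_rpow (by linarith), mul_zero]
    · have h1 : x (N + i) ≤ 1 / ((N : ℝ) + 1) := by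
        refine le_trans (kingman_le ⟨hmono, hnn, hsum, hle⟩ (N + i)) ?_
        apply div_le_div_of_nonneg_left one_pos.le (by positivity)
        push_cast; linarith [Nat.cast_nonneg (α := ℝ) i]
      have h2 : x (N + i) ^ (m - 1) ≤ c := by
        have := Real.rpow_le_rpow hpos.le h1 (by linarith : (0:ℝ) ≤ m - 1)
        rwa [one_div, Real.inv_rpow (by positivity), ← Real.rpow_neg (by positivity)] at this
      calc x (N + i) ^ m = x (N + i) ^ (m - 1 + 1) := by ring_nf
        _ = x (N + i) ^ (m - 1) * x (N + i) ^ (1 : ℝ) := Real.rpow_add hpos _ _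
        _ = x (N + i) ^ (m - 1) * x (N + i) := by rw [Real.rpow_one]
        _ ≤ c * x (N + i) := by
            exact mul_le_mul_of_nonneg_right h2 (hnn _)
  -- summabilities of tails
  have hsum_pow : Summable (fun i => x i ^ m) :=
    kingman_summable_pow m hm ⟨hmono, hnn, hsum, hle⟩
  have hs1 : Summable (fun i : ℕ => x (N + i) ^ m) := by
    have := (summable_nat_add_iff N).mpr hsum_pow
    simpa [add_comm] using this
  have hs2 : Summable (fun i : ℕ => x (N + i)) := by
    have := (summable_nat_add_iff N).mpr hsum
    simpa [add_comm] using this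
  have htail1 : ∑' i : ℕ, x (N + i) ≤ 1 := by
    have heq := Summable.sum_add_tsum_nat_add N hsum
    have hnn' : 0 ≤ ∑ i ∈ Finset.range N, x i :=
      Finset.sum_nonneg fun i _ => hnn i
    have : ∑' i : ℕ, x (i + N) ≤ 1 := by linarith
    simpa [add_comm] using this
  calc ∑' i : ℕ, x (N + i) ^ m ≤ ∑' i : ℕ, c * x (N + i) :=
        Summable.tsum_le_tsum hpt hs1 (hs2.mul_left c)
    _ = c * ∑' i : ℕ, x (N + i) := tsum_mul_left
    _ ≤ c * 1 := mul_le_mul_of_nonneg_left htail1 hcnn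
    _ = c := mul_one c

/-- For real `m > 1`, `φ_m(x) := ∑ x_i^m` converges for every `x` in the Kingman
simplex, with tail bound `∑_{i > N} x_i^m ≤ (N+1)^{-(m-1)}` (here `x` is 0-indexed,
so the tail omits the first `N` terms), and `φ_m` is continuous on the Kingman simplex
with respect to the product topology. -/
theorem phi_m_continuousOn (m : ℝ) (hm : 1 < m) :
    (∀ x ∈ KingmanSimplex,
      Summable (fun i => x i ^ m) ∧
      ∀ N : ℕ, ∑' i : ℕ, x (N + i) ^ m ≤ ((N : ℝ) + 1) ^ (-(m - 1))) ∧
    ContinuousOn (fun x : ℕ → ℝ => ∑' i, x i ^ m) KingmanSimplex := by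
  constructor
  · intro x hx
    exact ⟨kingman_summable_pow m hm hx, fun N => kingman_tail m hm hx N⟩
  · have huni : TendstoUniformlyOn
        (fun (N : ℕ) (x : ℕ → ℝ) => ∑ i ∈ Finset.range N, x i ^ m)
        (fun x : ℕ → ℝ => ∑' i, x i ^ m) atTop KingmanSimplex := by
      apply tendstoUniformlyOn_tsum_nat (u_summable m hm)
      intro n x hx
      rw [Real.norm_eq_abs, abs_of_nonneg (Real.rpow_nonneg (hx.2.1 n) m)]
      exact kingman_pow_le m hm hx n
    refine huni.continuousOn (Filter.Eventually.of_forall fun N => ?_).frequently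
    exact (continuous_finset_sum _ fun i _ =>
      (continuous_apply i).rpow_const fun y => Or.inr (by linarith)).continuousOn
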